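/- Suppose r, Ω, ψ satisfy the toroidally symmetric Einstein–Klein-Gordon system (EKG1)–(EKG5) on U. Define ϖ₁ = 2rᵤrᵥr/Ω² + r³/(2l²) and the potential V = (2g²/r³)ϖ₁ + (8πag/l²)ψ². Then the twisted form of the Klein-Gordon equation holds: ∂ᵥ( r·∇̃ᵤψ ) = (1/2 − κ)·rᵤ·∇̃ᵥψ − (Ω²/4)rVψ, and symmetrically ∂ᵤ( r·∇̃ᵥψ ) = (1/2 − κ)·rᵥ·∇̃ᵤψ − (Ω²/4)rVψ. -/

import Mathlib

/-- Partial derivative in the first (`u`) coordinate. -/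
noncomputable def pdu (f : ℝ × ℝ → ℝ) (p : ℝ × ℝ) : ℝ := deriv (fun u => f (u, p.2)) p.1

/-- Partial derivative in the second (`v`) coordinate. -/
noncomputable def pdv (f : ℝ × ℝ → ℝ) (p : ℝ × ℝ) : ℝ := deriv (fun v => f (p.1, v)) p.2

/-- The first renormalised Hawking mass `ϖ₁ = 2rᵤrᵥr/Ω² + r³/(2l²)`. -/
noncomputable def varpi1 (l : ℝ) (r Ω : ℝ × ℝ → ℝ) (q : ℝ × ℝ) : ℝ :=
  2 * pdu r q * pdv r q * r q / (Ω q) ^ 2 + (r q) ^ 3 / (2 * l ^ 2)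

/-- The potential `V = (2g²/r³)ϖ₁ + (8πag/l²)ψ²`. -/
noncomputable def potV (l a g : ℝ) (r Ω ψ : ℝ × ℝ → ℝ) (q : ℝ × ℝ) : ℝ :=
  (2 * g ^ 2 / (r q) ^ 3) * varpi1 l r Ω q + (8 * Real.pi * a * g / l ^ 2) * (ψ q) ^ 2

open Filter Topology

lemma hasDerivAt_slice_v {f : ℝ × ℝ → ℝ} {f' : ℝ × ℝ →L[ℝ] ℝ} {p : ℝ × ℝ}
    (hf : HasFDerivAt f f' p) : HasDerivAt (fun v => f (p.1, v)) (f' (0, 1)) p.2 := by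
  have h1 : HasDerivAt (fun v : ℝ => ((p.1 : ℝ), v)) ((0 : ℝ), (1 : ℝ)) p.2 :=
    HasDerivAt.prodMk (hasDerivAt_const _ _) (hasDerivAt_id _)
  have h2 : HasFDerivAt f f' (p.1, p.2) := by rwa [Prod.mk.eta]
  exact h2.comp_hasDerivAt p.2 h1

lemma hasDerivAt_slice_u {f : ℝ × ℝ → ℝ} {f' : ℝ × ℝ →L[ℝ] ℝ} {p : ℝ × ℝ}
    (hf : HasFDerivAt f f' p) : HasDerivAt (fun u => f (u, p.2)) (f' (1, 0)) p.1 := by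
  have h1 : HasDerivAt (fun u : ℝ => (u, (p.2 : ℝ))) ((1 : ℝ), (0 : ℝ)) p.1 :=
    HasDerivAt.prodMk (hasDerivAt_id _) (hasDerivAt_const _ _)
  have h2 : HasFDerivAt f f' (p.1, p.2) := by rwa [Prod.mk.eta]
  exact h2.comp_hasDerivAt p.1 h1

lemma pdu_eq_fderiv {f : ℝ × ℝ → ℝ} {p : ℝ × ℝ} (hf : DifferentiableAt ℝ f p) :
    pdu f p = fderiv ℝ f p (1, 0) := (hasDerivAt_slice_u hf.hasFDerivAt).deriv

lemma pdv_eq_fderiv {f : ℝ × ℝ → ℝ} {p : ℝ × ℝ} (hf : DifferentiableAt ℝ f p) :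
    pdv f p = fderiv ℝ f p (0, 1) := (hasDerivAt_slice_v hf.hasFDerivAt).deriv

/-- For `f` C² on an open set, the v-derivative of `pdu f` exists along slices and equals
the second fderiv. -/
lemma key_v {U : Set (ℝ × ℝ)} (hU : IsOpen U) {f : ℝ × ℝ → ℝ} (hf : ContDiffOn ℝ 2 f U)
    {p : ℝ × ℝ} (hp : p ∈ U) :
    HasDerivAt (fun v => pdu f (p.1, v)) (pdv (pdu f) p) p.2 ∧
      pdv (pdu f) p = fderiv ℝ (fderiv ℝ f) p (0, 1) (1, 0) := by
  have hdiff : ∀ q ∈ U, DifferentiableAt ℝ f q := fun q hq =>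
    (hf.contDiffAt (hU.mem_nhds hq)).differentiableAt (by norm_num)
  have hfd : ContDiffOn ℝ 1 (fderiv ℝ f) U := hf.fderiv_of_isOpen hU (by norm_num)
  have hG : HasFDerivAt (fderiv ℝ f) (fderiv ℝ (fderiv ℝ f) p) p :=
    (((hfd p hp).differentiableWithinAt (by norm_num)).differentiableAt
      (hU.mem_nhds hp)).hasFDerivAt
  have hF : HasFDerivAt (fun q => fderiv ℝ f q (1, 0))
      (((fderiv ℝ f p).comp 0) + (fderiv ℝ (fderiv ℝ f) p).flip ((1 : ℝ), (0 : ℝ))) p :=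
    hG.clm_apply (hasFDerivAt_const _ _)
  have hslice : HasDerivAt (fun v => fderiv ℝ f (p.1, v) (1, 0))
      (fderiv ℝ (fderiv ℝ f) p (0, 1) (1, 0)) p.2 := by
    simpa using hasDerivAt_slice_v hF
  -- eventual equality: pdu f agrees with q ↦ fderiv ℝ f q (1,0) near p along the slice
  have hev : (fun v => pdu f (p.1, v)) =ᶠ[nhds p.2] (fun v => fderiv ℝ f (p.1, v) (1, 0)) := by
    have hV : IsOpen {v : ℝ | (p.1, v) ∈ U} := hU.preimage (by fun_prop)
    have hmem : p.2 ∈ {v : ℝ | (p.1, v) ∈ U} := by simpa [Prod.mk.eta] using hp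
    filter_upwards [hV.mem_nhds hmem] with v hv
    exact pdu_eq_fderiv (hdiff _ hv)
  have hslice' : HasDerivAt (fun v => pdu f (p.1, v))
      (fderiv ℝ (fderiv ℝ f) p (0, 1) (1, 0)) p.2 := hslice.congr_of_eventuallyEq hev
  have : pdv (pdu f) p = fderiv ℝ (fderiv ℝ f) p (0, 1) (1, 0) := hslice'.deriv
  exact ⟨this ▸ hslice', this⟩

lemma key_u {U : Set (ℝ × ℝ)} (hU : IsOpen U) {f : ℝ × ℝ → ℝ} (hf : ContDiffOn ℝ 2 f U)
    {p : ℝ × ℝ} (hp : p ∈ U) :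
    HasDerivAt (fun u => pdv f (u, p.2)) (pdu (pdv f) p) p.1 ∧
      pdu (pdv f) p = fderiv ℝ (fderiv ℝ f) p (1, 0) (0, 1) := by
  have hdiff : ∀ q ∈ U, DifferentiableAt ℝ f q := fun q hq =>
    (hf.contDiffAt (hU.mem_nhds hq)).differentiableAt (by norm_num)
  have hfd : ContDiffOn ℝ 1 (fderiv ℝ f) U := hf.fderiv_of_isOpen hU (by norm_num)
  have hG : HasFDerivAt (fderiv ℝ f) (fderiv ℝ (fderiv ℝ f) p) p :=
    (((hfd p hp).differentiableWithinAt (by norm_num)).differentiableAt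
      (hU.mem_nhds hp)).hasFDerivAt
  have hF : HasFDerivAt (fun q => fderiv ℝ f q (0, 1))
      (((fderiv ℝ f p).comp 0) + (fderiv ℝ (fderiv ℝ f) p).flip ((0 : ℝ), (1 : ℝ))) p :=
    hG.clm_apply (hasFDerivAt_const _ _)
  have hslice : HasDerivAt (fun u => fderiv ℝ f (u, p.2) (0, 1))
      (fderiv ℝ (fderiv ℝ f) p (1, 0) (0, 1)) p.1 := by
    simpa using hasDerivAt_slice_u hF
  have hev : (fun u => pdv f (u, p.2)) =ᶠ[nhds p.1] (fun u => fderiv ℝ f (u, p.2) (0, 1)) := by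
    have hV : IsOpen {u : ℝ | (u, p.2) ∈ U} := hU.preimage (by fun_prop)
    have hmem : p.1 ∈ {u : ℝ | (u, p.2) ∈ U} := by simpa [Prod.mk.eta] using hp
    filter_upwards [hV.mem_nhds hmem] with u hu
    exact pdv_eq_fderiv (hdiff _ hu)
  have hslice' : HasDerivAt (fun u => pdv f (u, p.2))
      (fderiv ℝ (fderiv ℝ f) p (1, 0) (0, 1)) p.1 := hslice.congr_of_eventuallyEq hev
  have : pdu (pdv f) p = fderiv ℝ (fderiv ℝ f) p (1, 0) (0, 1) := hslice'.deriv
  exact ⟨this ▸ hslice', this⟩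

/-- Mixed partials commute for C² functions. -/
lemma mixed_symm {U : Set (ℝ × ℝ)} (hU : IsOpen U) {f : ℝ × ℝ → ℝ}
    (hf : ContDiffOn ℝ 2 f U) {p : ℝ × ℝ} (hp : p ∈ U) :
    pdu (pdv f) p = pdv (pdu f) p := by
  have h1 := (key_u hU hf hp).2
  have h2 := (key_v hU hf hp).2
  have hsymm : IsSymmSndFDerivAt ℝ f p :=
    (hf.contDiffAt (hU.mem_nhds hp)).isSymmSndFDerivAt (by norm_num)
  rw [h1, h2, hsymm (1, 0) (0, 1)]

lemma alg1 (P κ l ru rv su sv R W Ψ : ℝ) (hR : R ≠ 0) (hW : W ≠ 0) (hl : l ≠ 0) :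
    rv * su + R * (-(ru / R) * sv - rv / R * su - W ^ 2 * (κ ^ 2 / 2 - 9 / 8) / (2 * l ^ 2) * Ψ)
      - (-3 / 2 + κ) * ((-(ru * rv) / R
          + 2 * P * (κ ^ 2 / 2 - 9 / 8) * R / l ^ 2 * W ^ 2 * Ψ ^ 2
          - 3 / 4 * (R / l ^ 2) * W ^ 2) * Ψ + ru * sv)
    = (1 / 2 - κ) * ru * (sv - (-3 / 2 + κ) * (rv / R) * Ψ)
      - W ^ 2 / 4 * R * (2 * (-3 / 2 + κ) ^ 2 / R ^ 3
          * (2 * ru * rv * R / W ^ 2 + R ^ 3 / (2 * l ^ 2))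
          + 8 * P * (κ ^ 2 / 2 - 9 / 8) * (-3 / 2 + κ) / l ^ 2 * Ψ ^ 2) * Ψ := by
  field_simp
  ring

/-- If `r, Ω, ψ` satisfy the toroidally symmetric Einstein–Klein-Gordon system
(EKG1)–(EKG5) on an open set `U`, then the twisted form of the Klein-Gordon equation
holds: `∂ᵥ(r∇̃ᵤψ) = (1/2 − κ)rᵤ∇̃ᵥψ − (Ω²/4)rVψ`, and symmetrically
`∂ᵤ(r∇̃ᵥψ) = (1/2 − κ)rᵥ∇̃ᵤψ − (Ω²/4)rVψ`, where `∇̃ᵤψ = ψᵤ − g(rᵤ/r)ψ`,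
`∇̃ᵥψ = ψᵥ − g(rᵥ/r)ψ`. -/
theorem stmt_7 (U : Set (ℝ × ℝ)) (hU : IsOpen U)
    (r Ω ψ : ℝ × ℝ → ℝ)
    (l κ a g : ℝ) (hl : 0 < l) (hκ : κ ∈ Set.Ioo (0 : ℝ) 1)
    (ha : a = κ ^ 2 / 2 - 9 / 8) (hg : g = -3 / 2 + κ)
    (hrC : ContDiffOn ℝ 2 r U) (hΩC : ContDiffOn ℝ 2 Ω U) (hψC : ContDiffOn ℝ 2 ψ U)
    (hrpos : ∀ p ∈ U, 0 < r p) (hΩpos : ∀ p ∈ U, 0 < Ω p)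
    (hEKG1 : ∀ p ∈ U, pdu (fun q => pdu r q / (Ω q) ^ 2) p
        = -(4 * Real.pi) * r p * (pdu ψ p) ^ 2 / (Ω p) ^ 2)
    (hEKG2 : ∀ p ∈ U, pdv (fun q => pdv r q / (Ω q) ^ 2) p
        = -(4 * Real.pi) * r p * (pdv ψ p) ^ 2 / (Ω p) ^ 2)
    (hEKG3 : ∀ p ∈ U, pdv (pdu r) p = -(pdu r p * pdv r p) / r p
        + (2 * Real.pi * a * r p / l ^ 2) * (Ω p) ^ 2 * (ψ p) ^ 2
        - (3 / 4) * (r p / l ^ 2) * (Ω p) ^ 2)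
    (hEKG4 : ∀ p ∈ U, pdv (pdu (fun q => Real.log (Ω q))) p
        = -(4 * Real.pi) * pdu ψ p * pdv ψ p + (pdu r p * pdv r p) / (r p) ^ 2)
    (hEKG5 : ∀ p ∈ U, pdv (pdu ψ) p = -(pdu r p / r p) * pdv ψ p
        - (pdv r p / r p) * pdu ψ p - ((Ω p) ^ 2 * a / (2 * l ^ 2)) * ψ p) :
    ∀ p ∈ U,
      pdv (fun q => r q * (pdu ψ q - g * (pdu r q / r q) * ψ q)) p
        = (1 / 2 - κ) * pdu r p * (pdv ψ p - g * (pdv r p / r p) * ψ p)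
          - ((Ω p) ^ 2 / 4) * r p * potV l a g r Ω ψ p * ψ p
      ∧
      pdu (fun q => r q * (pdv ψ q - g * (pdv r q / r q) * ψ q)) p
        = (1 / 2 - κ) * pdv r p * (pdu ψ p - g * (pdu r p / r p) * ψ p)
          - ((Ω p) ^ 2 / 4) * r p * potV l a g r Ω ψ p * ψ p := by
  intro p hp
  have hrne : r p ≠ 0 := (hrpos p hp).ne'
  have hΩne : Ω p ≠ 0 := (hΩpos p hp).ne'
  have hlne : l ≠ 0 := hl.ne'
  have hdr : ∀ q ∈ U, DifferentiableAt ℝ r q := fun q hq =>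
    (hrC.contDiffAt (hU.mem_nhds hq)).differentiableAt (by norm_num)
  have hdψ : ∀ q ∈ U, DifferentiableAt ℝ ψ q := fun q hq =>
    (hψC.contDiffAt (hU.mem_nhds hq)).differentiableAt (by norm_num)
  -- slice derivatives at p, v-direction
  have hr_v : HasDerivAt (fun v => r (p.1, v)) (pdv r p) p.2 := by
    have := hasDerivAt_slice_v (hdr p hp).hasFDerivAt
    rwa [← pdv_eq_fderiv (hdr p hp)] at this
  have hψ_v : HasDerivAt (fun v => ψ (p.1, v)) (pdv ψ p) p.2 := by
    have := hasDerivAt_slice_v (hdψ p hp).hasFDerivAt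
    rwa [← pdv_eq_fderiv (hdψ p hp)] at this
  have hru_v : HasDerivAt (fun v => pdu r (p.1, v)) (pdv (pdu r) p) p.2 := (key_v hU hrC hp).1
  have hψu_v : HasDerivAt (fun v => pdu ψ (p.1, v)) (pdv (pdu ψ) p) p.2 := (key_v hU hψC hp).1
  -- slice derivatives at p, u-direction
  have hr_u : HasDerivAt (fun u => r (u, p.2)) (pdu r p) p.1 := by
    have := hasDerivAt_slice_u (hdr p hp).hasFDerivAt
    rwa [← pdu_eq_fderiv (hdr p hp)] at this
  have hψ_u : HasDerivAt (fun u => ψ (u, p.2)) (pdu ψ p) p.1 := by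
    have := hasDerivAt_slice_u (hdψ p hp).hasFDerivAt
    rwa [← pdu_eq_fderiv (hdψ p hp)] at this
  have hrv_u : HasDerivAt (fun u => pdv r (u, p.2)) (pdu (pdv r) p) p.1 := (key_u hU hrC hp).1
  have hψv_u : HasDerivAt (fun u => pdv ψ (u, p.2)) (pdu (pdv ψ) p) p.1 := (key_u hU hψC hp).1
  have hsymr : pdu (pdv r) p = pdv (pdu r) p := mixed_symm hU hrC hp
  have hsymψ : pdu (pdv ψ) p = pdv (pdu ψ) p := mixed_symm hU hψC hp
  constructor
  · -- first conjunct
    have hprod : HasDerivAt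
        (fun v => r (p.1, v) * pdu ψ (p.1, v) - g * (pdu r (p.1, v) * ψ (p.1, v)))
        (pdv r p * pdu ψ p + r p * pdv (pdu ψ) p
          - g * (pdv (pdu r) p * ψ p + pdu r p * pdv ψ p)) p.2 :=
      (hr_v.mul hψu_v).sub ((hru_v.mul hψ_v).const_mul g)
    have hev : (fun v => r (p.1, v) * (pdu ψ (p.1, v)
        - g * (pdu r (p.1, v) / r (p.1, v)) * ψ (p.1, v))) =ᶠ[nhds p.2]
        (fun v => r (p.1, v) * pdu ψ (p.1, v) - g * (pdu r (p.1, v) * ψ (p.1, v))) := by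
      have hV : IsOpen {v : ℝ | (p.1, v) ∈ U} := hU.preimage (by fun_prop)
      have hmem : p.2 ∈ {v : ℝ | (p.1, v) ∈ U} := by simpa [Prod.mk.eta] using hp
      filter_upwards [hV.mem_nhds hmem] with v hv
      have hne : r (p.1, v) ≠ 0 := (hrpos _ hv).ne'
      field_simp
    have hder : HasDerivAt (fun v => r (p.1, v) * (pdu ψ (p.1, v)
        - g * (pdu r (p.1, v) / r (p.1, v)) * ψ (p.1, v)))
        (pdv r p * pdu ψ p + r p * pdv (pdu ψ) p
          - g * (pdv (pdu r) p * ψ p + pdu r p * pdv ψ p)) p.2 :=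
      hprod.congr_of_eventuallyEq hev
    have hLHS : pdv (fun q => r q * (pdu ψ q - g * (pdu r q / r q) * ψ q)) p
        = pdv r p * pdu ψ p + r p * pdv (pdu ψ) p
          - g * (pdv (pdu r) p * ψ p + pdu r p * pdv ψ p) := hder.deriv
    rw [hLHS, hEKG5 p hp, hEKG3 p hp, potV, varpi1]
    subst ha hg
    linear_combination alg1 Real.pi κ l (pdu r p) (pdv r p) (pdu ψ p) (pdv ψ p)
      (r p) (Ω p) (ψ p) hrne hΩne hlne
  · -- second conjunct
    have hprod : HasDerivAt
        (fun u => r (u, p.2) * pdv ψ (u, p.2) - g * (pdv r (u, p.2) * ψ (u, p.2)))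
        (pdu r p * pdv ψ p + r p * pdu (pdv ψ) p
          - g * (pdu (pdv r) p * ψ p + pdv r p * pdu ψ p)) p.1 :=
      (hr_u.mul hψv_u).sub ((hrv_u.mul hψ_u).const_mul g)
    have hev : (fun u => r (u, p.2) * (pdv ψ (u, p.2)
        - g * (pdv r (u, p.2) / r (u, p.2)) * ψ (u, p.2))) =ᶠ[nhds p.1]
        (fun u => r (u, p.2) * pdv ψ (u, p.2) - g * (pdv r (u, p.2) * ψ (u, p.2))) := by
      have hV : IsOpen {u : ℝ | (u, p.2) ∈ U} := hU.preimage (by fun_prop)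
      have hmem : p.1 ∈ {u : ℝ | (u, p.2) ∈ U} := by simpa [Prod.mk.eta] using hp
      filter_upwards [hV.mem_nhds hmem] with u hu
      have hne : r (u, p.2) ≠ 0 := (hrpos _ hu).ne'
      field_simp
    have hder : HasDerivAt (fun u => r (u, p.2) * (pdv ψ (u, p.2)
        - g * (pdv r (u, p.2) / r (u, p.2)) * ψ (u, p.2)))
        (pdu r p * pdv ψ p + r p * pdu (pdv ψ) p
          - g * (pdu (pdv r) p * ψ p + pdv r p * pdu ψ p)) p.1 :=
      hprod.congr_of_eventuallyEq hev
    have hLHS : pdu (fun q => r q * (pdv ψ q - g * (pdv r q / r q) * ψ q)) p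
        = pdu r p * pdv ψ p + r p * pdu (pdv ψ) p
          - g * (pdu (pdv r) p * ψ p + pdv r p * pdu ψ p) := hder.deriv
    rw [hLHS, hsymψ, hsymr, hEKG5 p hp, hEKG3 p hp, potV, varpi1]
    subst ha hg
    linear_combination alg1 Real.pi κ l (pdv r p) (pdu r p) (pdv ψ p) (pdu ψ p)
      (r p) (Ω p) (ψ p) hrne hΩne hlne
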